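/- Let U, V, W be linear subspaces of ℝⁿ with V + W = ℝⁿ, with ∠_m(V,W) ≥ γ > 0 and ∠_M(U,V) ≤ δ, where dim U = dim V. Then there exists a constant C depending only on γ, dim V and n (not on U, V, W or δ) such that ∠_M(U∩W, V∩W) ≤ C·δ, provided U∩W and V∩W are nonzero and dim(U∩W) = dim(V∩W). -/

import Mathlib

open RealInnerProductSpace

/-- Angle in [0, π/2] between the lines spanned by two vectors. -/
noncomputable def lineAngle {E : Type*} [NormedAddCommGroup E] [InnerProductSpace ℝ E]
    (u v : E) : ℝ :=
  Real.arccos (|⟪u, v⟫| / (‖u‖ * ‖v‖))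

/-- Maximal angle between two subspaces:
`∠_M(U,V) = max_{u∈U\0} min_{v∈V\0} ∠(u,v)`. -/
noncomputable def maxAngle {E : Type*} [NormedAddCommGroup E] [InnerProductSpace ℝ E]
    (U V : Submodule ℝ E) : ℝ :=
  sSup ((fun u => sInf (lineAngle u '' {v : E | v ∈ V ∧ v ≠ 0})) ''
    {u : E | u ∈ U ∧ u ≠ 0})

/-- Minimal angle between two subspaces, 0 in the non-transversal case,
computed on the orthogonal complement of the intersection otherwise
(π/2 when the subspaces are complementary). -/
noncomputable def minAngle {E : Type*} [NormedAddCommGroup E] [InnerProductSpace ℝ E]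
    (U V : Submodule ℝ E) : ℝ := by
  classical exact
  if U ⊔ V = ⊤ then
    if U ⊓ (U ⊓ V)ᗮ = ⊥ ∨ V ⊓ (U ⊓ V)ᗮ = ⊥ then Real.pi / 2
    else sInf {θ : ℝ | ∃ u ∈ U ⊓ (U ⊓ V)ᗮ, u ≠ 0 ∧
      ∃ v ∈ V ⊓ (U ⊓ V)ᗮ, v ≠ 0 ∧ θ = lineAngle u v}
  else 0

section Helpers

variable {E : Type*} [NormedAddCommGroup E] [InnerProductSpace ℝ E]

lemma lineAngle_nonneg (u v : E) : 0 ≤ lineAngle u v := Real.arccos_nonneg _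

lemma lineAngle_le_pi_div_two (u v : E) : lineAngle u v ≤ Real.pi / 2 :=
  Real.arccos_le_pi_div_two.2 (by positivity)

lemma lineAngle_smul_left {r : ℝ} (hr : r ≠ 0) (u v : E) :
    lineAngle (r • u) v = lineAngle u v := by
  unfold lineAngle
  rw [real_inner_smul_left, norm_smul, Real.norm_eq_abs, abs_mul, mul_assoc,
    mul_div_mul_left _ _ (abs_ne_zero.2 hr)]

lemma le_of_sq_le_sq'' {a b : ℝ} (ha : 0 ≤ a) (hb : 0 ≤ b) (h : a ^ 2 ≤ b ^ 2) : a ≤ b := by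
  nlinarith

lemma norm_sub_smul_sq (u v : E) (hu : ‖u‖ = 1) (r : ℝ) :
    ‖u - r • v‖ ^ 2 = 1 - 2 * r * ⟪u, v⟫ + r ^ 2 * ‖v‖ ^ 2 := by
  rw [norm_sub_sq_real, real_inner_smul_right, norm_smul, hu, Real.norm_eq_abs, mul_pow, sq_abs]
  ring

lemma dist_line_sq {u v : E} (hu : ‖u‖ = 1) (hv : v ≠ 0) (r : ℝ) :
    1 - ⟪u, v⟫ ^ 2 / ‖v‖ ^ 2 ≤ ‖u - r • v‖ ^ 2 := by
  have hm : (0 : ℝ) < ‖v‖ ^ 2 := pow_pos (norm_pos_iff.2 hv) 2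
  have key : 2 * r * ⟪u, v⟫ - r ^ 2 * ‖v‖ ^ 2 ≤ ⟪u, v⟫ ^ 2 / ‖v‖ ^ 2 := by
    rw [le_div_iff₀ hm]; nlinarith [sq_nonneg (⟪u, v⟫ - r * ‖v‖ ^ 2)]
  rw [norm_sub_smul_sq u v hu r]
  linarith

lemma exists_close_on_line {u v : E} (hu : ‖u‖ = 1) (hv : v ≠ 0) :
    ∃ r : ℝ, ‖u - r • v‖ ^ 2 = 1 - ⟪u, v⟫ ^ 2 / ‖v‖ ^ 2 := by
  have hm : (‖v‖ : ℝ) ≠ 0 := norm_ne_zero_iff.2 hv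
  refine ⟨⟪u, v⟫ / ‖v‖ ^ 2, ?_⟩
  rw [norm_sub_smul_sq u v hu]
  field_simp
  ring

lemma lineAngle_le_of_close {u v : E} (hu : ‖u‖ = 1) (hv : v ≠ 0) {t : ℝ}
    (ht0 : 0 ≤ t) (ht1 : t ≤ 1) (h : ‖u - v‖ ≤ t) :
    lineAngle u v ≤ Real.pi / 2 * t := by
  have hπ := Real.pi_pos
  have hm : (0 : ℝ) < ‖v‖ := norm_pos_iff.2 hv
  set c := |⟪u, v⟫| / (‖u‖ * ‖v‖) with hcdef
  have hc' : c = |⟪u, v⟫| / ‖v‖ := by rw [hcdef, hu, one_mul]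
  have hc0 : 0 ≤ c := by rw [hc']; positivity
  have hcsq : 1 - t ^ 2 ≤ c ^ 2 := by
    have h1 := dist_line_sq hu hv 1
    rw [one_smul] at h1
    have h2 : ‖u - v‖ ^ 2 ≤ t ^ 2 := by nlinarith [norm_nonneg (u - v)]
    have h3 : c ^ 2 = ⟪u, v⟫ ^ 2 / ‖v‖ ^ 2 := by rw [hc', div_pow, sq_abs]
    linarith [h3 ▸ (by linarith : 1 - t ^ 2 ≤ ⟪u, v⟫ ^ 2 / ‖v‖ ^ 2 )]
  have hcos0 : 0 ≤ Real.cos (Real.pi / 2 * t) :=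
    Real.cos_nonneg_of_mem_Icc ⟨by nlinarith, by nlinarith⟩
  have hsin : t ≤ Real.sin (Real.pi / 2 * t) := Real.le_sin_mul ht0 ht1
  have hcos : Real.cos (Real.pi / 2 * t) ≤ c := by
    have hpyth := Real.sin_sq_add_cos_sq (Real.pi / 2 * t)
    exact le_of_sq_le_sq'' hcos0 hc0 (by nlinarith)
  have harc : lineAngle u v ≤ Real.arccos (Real.cos (Real.pi / 2 * t)) := by
    show Real.arccos c ≤ _
    rw [Real.arccos_eq_pi_div_two_sub_arcsin, Real.arccos_eq_pi_div_two_sub_arcsin]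
    linarith [Real.monotone_arcsin hcos]
  rwa [Real.arccos_cos (by positivity) (by nlinarith)] at harc

lemma abs_inner_le_of_lineAngle_ge {a b : E} (ha : a ≠ 0) (hb : b ≠ 0) {γ : ℝ}
    (hγ0 : 0 ≤ γ) (h : γ ≤ lineAngle a b) : |⟪a, b⟫| ≤ Real.cos γ * (‖a‖ * ‖b‖) := by
  have hπ := Real.pi_pos
  have hd : (0 : ℝ) < ‖a‖ * ‖b‖ := by
    have := norm_pos_iff.2 ha; have := norm_pos_iff.2 hb; positivity
  set x := |⟪a, b⟫| / (‖a‖ * ‖b‖) with hx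
  have hx1 : x ≤ 1 := div_le_one_of_le₀ (abs_real_inner_le_norm a b) hd.le
  have hx0 : 0 ≤ x := by positivity
  have hxc : x ≤ Real.cos γ := by
    have h2 : Real.cos (lineAngle a b) ≤ Real.cos γ :=
      Real.cos_le_cos_of_nonneg_of_le_pi hγ0
        ((lineAngle_le_pi_div_two a b).trans (by linarith)) h
    rwa [show lineAngle a b = Real.arccos x from rfl,
      Real.cos_arccos (by linarith) hx1] at h2
  have : |⟪a, b⟫| = x * (‖a‖ * ‖b‖) := (div_mul_cancel₀ _ hd.ne').symm
  rw [this]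
  exact mul_le_mul_of_nonneg_right hxc hd.le

end Helpers

section Decomp

variable {n : ℕ}

local notation "Euc" => EuclideanSpace ℝ (Fin n)

lemma le_of_inf_orthogonal_eq_bot (V W : Submodule ℝ (EuclideanSpace ℝ (Fin n)))
    (h : V ⊓ (V ⊓ W)ᗮ = ⊥) : V ≤ W := by
  intro v hv
  set T := V ⊓ W with hT
  set p := (T.orthogonalProjectionOnto v : EuclideanSpace ℝ (Fin n)) with hp
  have hpT : p ∈ T := SetLike.coe_mem _
  have h1 : v - p ∈ V ⊓ Tᗮ :=
    ⟨V.sub_mem hv hpT.1, Submodule.sub_starProjection_mem_orthogonal v⟩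
  rw [h, Submodule.mem_bot, sub_eq_zero] at h1
  rw [h1]
  exact hpT.2

lemma decomp_aux (V W : Submodule ℝ (EuclideanSpace ℝ (Fin n)))
    (hsup : V ⊔ W = ⊤) {κ : ℝ} (hκ0 : 0 ≤ κ) (hκ1 : κ < 1)
    (hang : ∀ a ∈ V ⊓ (V ⊓ W)ᗮ, ∀ b ∈ W ⊓ (V ⊓ W)ᗮ, |⟪a, b⟫| ≤ κ * (‖a‖ * ‖b‖))
    (e : EuclideanSpace ℝ (Fin n)) :
    ∃ b ∈ W, e - b ∈ V ∧ ‖b‖ ≤ (1 + (Real.sqrt (1 - κ))⁻¹) * ‖e‖ := by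
  have he' : e ∈ V ⊔ W := hsup ▸ Submodule.mem_top
  obtain ⟨a₀, ha₀, b₀, hb₀, hab⟩ := Submodule.mem_sup.1 he'
  set T := V ⊓ W with hT
  set pa := (T.orthogonalProjectionOnto a₀ : EuclideanSpace ℝ (Fin n)) with hpa
  have hpaT : pa ∈ T := SetLike.coe_mem _
  set a' := a₀ - pa with ha'
  set b₁ := b₀ + pa with hb₁def
  set c := (T.orthogonalProjectionOnto b₁ : EuclideanSpace ℝ (Fin n)) with hc
  have hcT : c ∈ T := SetLike.coe_mem _
  set b'' := b₁ - c with hb''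
  have ha'V : a' ∈ V := V.sub_mem ha₀ hpaT.1
  have ha'o : a' ∈ Tᗮ := Submodule.sub_starProjection_mem_orthogonal a₀
  have hb₁W : b₁ ∈ W := W.add_mem hb₀ hpaT.2
  have hb''W : b'' ∈ W := W.sub_mem hb₁W hcT.2
  have hb''o : b'' ∈ Tᗮ := Submodule.sub_starProjection_mem_orthogonal b₁
  have heb : e - b₁ = a' := by rw [← hab, ha', hb₁def]; abel
  -- orthogonality of a' + b'' with c
  have hoc : ⟪a' + b'', c⟫ = 0 := by
    rw [real_inner_comm]
    exact (Submodule.mem_orthogonal T (a' + b'')).1 (Submodule.add_mem _ ha'o hb''o) c hcT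
  have hsplit : ‖e‖ ^ 2 = ‖a' + b''‖ ^ 2 + ‖c‖ ^ 2 := by
    have : e = (a' + b'') + c := by rw [ha', hb'', hb₁def, ← hab]; abel
    rw [this, norm_add_sq_real, hoc]; ring
  have hinner : |⟪a', b''⟫| ≤ κ * (‖a'‖ * ‖b''‖) :=
    hang a' ⟨ha'V, ha'o⟩ b'' ⟨hb''W, hb''o⟩
  have hab2 : ‖a' + b''‖ ^ 2 = ‖a'‖ ^ 2 + 2 * ⟪a', b''⟫ + ‖b''‖ ^ 2 := norm_add_sq_real a' b''
  have hkey : (1 - κ) * ‖a'‖ ^ 2 ≤ ‖e‖ ^ 2 := by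
    have h1 : |⟪a', b''⟫| ≤ κ * (‖a'‖ * ‖b''‖) := hinner
    have h2 := abs_le.1 h1
    nlinarith [sq_nonneg (‖a'‖ - ‖b''‖), sq_nonneg ‖c‖]
  -- deduce ‖a'‖ ≤ (√(1-κ))⁻¹ * ‖e‖
  set s := Real.sqrt (1 - κ) with hs
  have hspos : 0 < s := Real.sqrt_pos.2 (by linarith)
  have hssq : s ^ 2 = 1 - κ := Real.sq_sqrt (by linarith)
  have hsa : s * ‖a'‖ ≤ ‖e‖ := by
    apply le_of_sq_le_sq'' (by positivity) (norm_nonneg e)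
    calc (s * ‖a'‖) ^ 2 = (1 - κ) * ‖a'‖ ^ 2 := by rw [mul_pow, hssq]
    _ ≤ ‖e‖ ^ 2 := hkey
  have hA : ‖a'‖ ≤ s⁻¹ * ‖e‖ := by
    rw [← mul_le_mul_iff_of_pos_left hspos, ← mul_assoc, mul_inv_cancel₀ hspos.ne', one_mul]
    exact hsa
  refine ⟨b₁, hb₁W, heb ▸ ha'V, ?_⟩
  calc ‖b₁‖ = ‖e - a'‖ := by rw [← heb, sub_sub_cancel]
  _ ≤ ‖e‖ + ‖a'‖ := norm_sub_le e a'
  _ ≤ ‖e‖ + s⁻¹ * ‖e‖ := by linarith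
  _ = (1 + s⁻¹) * ‖e‖ := by ring

end Decomp

section Part3

lemma minAngle_eq_sInf {E : Type*} [NormedAddCommGroup E] [InnerProductSpace ℝ E]
    (U V : Submodule ℝ E) (h1 : U ⊔ V = ⊤)
    (h2 : ¬(U ⊓ (U ⊓ V)ᗮ = ⊥ ∨ V ⊓ (U ⊓ V)ᗮ = ⊥)) :
    minAngle U V = sInf {θ : ℝ | ∃ u ∈ U ⊓ (U ⊓ V)ᗮ, u ≠ 0 ∧
      ∃ v ∈ V ⊓ (U ⊓ V)ᗮ, v ≠ 0 ∧ θ = lineAngle u v} := by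
  unfold minAngle
  rw [if_pos h1, if_neg h2]

/-- The effective constant. -/
noncomputable def angleConst (γ : ℝ) : ℝ :=
  1 + (Real.sqrt (1 - Real.cos (min γ (Real.pi / 2))))⁻¹

lemma cos_min_lt_one {γ : ℝ} (hγ : 0 < γ) : Real.cos (min γ (Real.pi / 2)) < 1 := by
  have hπ := Real.pi_pos
  have hγ'0 : 0 < min γ (Real.pi / 2) := lt_min hγ (by linarith)
  have := Real.cos_lt_cos_of_nonneg_of_le_pi (le_refl 0)
    ((min_le_right γ (Real.pi / 2)).trans (by linarith)) hγ'0
  simpa using this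

lemma angleConst_ge_two {γ : ℝ} (hγ : 0 < γ) : 2 ≤ angleConst γ := by
  have hπ := Real.pi_pos
  have hγ'2 : min γ (Real.pi / 2) ≤ Real.pi / 2 := min_le_right _ _
  have hγ'0 : 0 < min γ (Real.pi / 2) := lt_min hγ (by linarith)
  have hcos0 : 0 ≤ Real.cos (min γ (Real.pi / 2)) :=
    Real.cos_nonneg_of_mem_Icc ⟨by linarith, hγ'2⟩
  have h1 : Real.sqrt (1 - Real.cos (min γ (Real.pi / 2))) ≤ 1 :=
    Real.sqrt_le_one.2 (by nlinarith [Real.neg_one_le_cos (min γ (Real.pi / 2))])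
  have h0 : 0 < Real.sqrt (1 - Real.cos (min γ (Real.pi / 2))) :=
    Real.sqrt_pos.2 (by linarith [cos_min_lt_one hγ])
  have : 1 ≤ (Real.sqrt (1 - Real.cos (min γ (Real.pi / 2))))⁻¹ := by
    rw [le_inv_comm₀ one_pos h0]; simpa using h1
  unfold angleConst; linarith

lemma decomp_of_minAngle {n : ℕ} (V W : Submodule ℝ (EuclideanSpace ℝ (Fin n)))
    (hsup : V ⊔ W = ⊤) {γ : ℝ} (hγ : 0 < γ) (hmin : γ ≤ minAngle V W)
    (e : EuclideanSpace ℝ (Fin n)) :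
    ∃ b ∈ W, e - b ∈ V ∧ ‖b‖ ≤ angleConst γ * ‖e‖ := by
  have hπ := Real.pi_pos
  set γ' := min γ (Real.pi / 2) with hγ'def
  have hγ'0 : 0 < γ' := lt_min hγ (by linarith)
  have hγ'2 : γ' ≤ Real.pi / 2 := min_le_right _ _
  have hκ0 : 0 ≤ Real.cos γ' := Real.cos_nonneg_of_mem_Icc ⟨by linarith, hγ'2⟩
  have hκ1 : Real.cos γ' < 1 := cos_min_lt_one hγ
  have hK1 : (1:ℝ) ≤ angleConst γ := by linarith [angleConst_ge_two hγ]
  by_cases hdeg : V ⊓ (V ⊓ W)ᗮ = ⊥ ∨ W ⊓ (V ⊓ W)ᗮ = ⊥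
  · rcases hdeg with h | h
    · have hVW : V ≤ W := le_of_inf_orthogonal_eq_bot V W h
      have hWtop : W = ⊤ := by rw [← hsup, sup_eq_right.2 hVW]
      refine ⟨e, hWtop ▸ Submodule.mem_top, by simpa using V.zero_mem, ?_⟩
      nlinarith [norm_nonneg e]
    · have hWV : W ≤ V := le_of_inf_orthogonal_eq_bot W V (by rwa [inf_comm W V])
      have hVtop : V = ⊤ := by rw [← hsup, sup_eq_left.2 hWV]
      refine ⟨0, W.zero_mem, hVtop ▸ Submodule.mem_top, ?_⟩
      simp only [norm_zero]
      positivity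
  · have heq := minAngle_eq_sInf V W hsup hdeg
    have hang : ∀ a ∈ V ⊓ (V ⊓ W)ᗮ, ∀ b ∈ W ⊓ (V ⊓ W)ᗮ,
        |⟪a, b⟫| ≤ Real.cos γ' * (‖a‖ * ‖b‖) := by
      intro a haM b hbM
      by_cases ha : a = 0
      · simp only [ha, inner_zero_left, abs_zero, norm_zero]
        positivity
      by_cases hb : b = 0
      · simp only [hb, inner_zero_right, abs_zero, norm_zero]
        positivity
      have hmem : lineAngle a b ∈ {θ : ℝ | ∃ u ∈ V ⊓ (V ⊓ W)ᗮ, u ≠ 0 ∧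
          ∃ v ∈ W ⊓ (V ⊓ W)ᗮ, v ≠ 0 ∧ θ = lineAngle u v} :=
        ⟨a, haM, ha, b, hbM, hb, rfl⟩
      have hbdd : BddBelow {θ : ℝ | ∃ u ∈ V ⊓ (V ⊓ W)ᗮ, u ≠ 0 ∧
          ∃ v ∈ W ⊓ (V ⊓ W)ᗮ, v ≠ 0 ∧ θ = lineAngle u v} := by
        refine ⟨0, fun θ hθ => ?_⟩
        obtain ⟨u, -, -, v, -, -, rfl⟩ := hθ
        exact lineAngle_nonneg u v
      have h1 : γ ≤ lineAngle a b := hmin.trans (heq ▸ csInf_le hbdd hmem)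
      have h2 : γ' ≤ lineAngle a b := (min_le_left γ (Real.pi / 2)).trans h1
      exact abs_inner_le_of_lineAngle_ge ha hb hγ'0.le h2
    obtain ⟨b, hbW, hebV, hnorm⟩ := decomp_aux V W hsup hκ0 hκ1 hang e
    exact ⟨b, hbW, hebV, hnorm⟩

end Part3

section Main

lemma sInf_angle_nonneg {E : Type*} [NormedAddCommGroup E] [InnerProductSpace ℝ E]
    (P : Submodule ℝ E) (u : E) :
    0 ≤ sInf (lineAngle u '' {v : E | v ∈ P ∧ v ≠ 0}) := by
  apply Real.sInf_nonneg
  rintro x ⟨v, -, rfl⟩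
  exact lineAngle_nonneg u v

lemma bddBelow_angle {E : Type*} [NormedAddCommGroup E] [InnerProductSpace ℝ E]
    (P : Submodule ℝ E) (u : E) :
    BddBelow (lineAngle u '' {v : E | v ∈ P ∧ v ≠ 0}) := by
  refine ⟨0, ?_⟩
  rintro x ⟨v, -, rfl⟩
  exact lineAngle_nonneg u v

lemma sInf_angle_le_pi_div_two {E : Type*} [NormedAddCommGroup E] [InnerProductSpace ℝ E]
    (P : Submodule ℝ E) {w : E} (hw : w ∈ P) (hw0 : w ≠ 0) (u : E) :
    sInf (lineAngle u '' {v : E | v ∈ P ∧ v ≠ 0}) ≤ Real.pi / 2 :=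
  (csInf_le (bddBelow_angle P u) ⟨w, ⟨hw, hw0⟩, rfl⟩).trans (lineAngle_le_pi_div_two u w)

lemma bddAbove_maxAngle_set {E : Type*} [NormedAddCommGroup E] [InnerProductSpace ℝ E]
    (U P : Submodule ℝ E) {w : E} (hw : w ∈ P) (hw0 : w ≠ 0) :
    BddAbove ((fun u => sInf (lineAngle u '' {v : E | v ∈ P ∧ v ≠ 0})) ''
      {u : E | u ∈ U ∧ u ≠ 0}) := by
  refine ⟨Real.pi / 2, ?_⟩
  rintro x ⟨u, -, rfl⟩
  exact sInf_angle_le_pi_div_two P hw hw0 u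


set_option maxHeartbeats 1000000 in
theorem stmt_11 (n : ℕ) (γ : ℝ) (hγ : 0 < γ) (d : ℕ) :
    ∃ C : ℝ, 0 < C ∧
      ∀ (U V W : Submodule ℝ (EuclideanSpace ℝ (Fin n))) (δ : ℝ),
        Module.finrank ℝ U = d → Module.finrank ℝ V = d →
        V ⊔ W = ⊤ → γ ≤ minAngle V W → maxAngle U V ≤ δ →
        U ⊓ W ≠ ⊥ → V ⊓ W ≠ ⊥ →
        Module.finrank ℝ (U ⊓ W : Submodule ℝ (EuclideanSpace ℝ (Fin n)))
          = Module.finrank ℝ (V ⊓ W : Submodule ℝ (EuclideanSpace ℝ (Fin n))) →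
        maxAngle (U ⊓ W) (V ⊓ W) ≤ C * δ := by
  have hπ := Real.pi_pos
  have hπ3 := Real.pi_gt_three
  have hπ4 := Real.pi_le_four
  set K := angleConst γ with hKdef
  have hK2 : 2 ≤ K := angleConst_ge_two hγ
  have hK0 : 0 < K := by linarith
  refine ⟨Real.pi * K, by positivity, ?_⟩
  intro U V W δ hU hV hsup hmin hmax hUW hVW hrank
  obtain ⟨u₀, hu₀m, hu₀⟩ := Submodule.exists_mem_ne_zero_of_ne_bot hUW
  obtain ⟨v₀, hv₀m, hv₀⟩ := Submodule.exists_mem_ne_zero_of_ne_bot hVW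
  have hv₀V : v₀ ∈ V := hv₀m.1
  -- δ is nonnegative
  have hδ0 : 0 ≤ δ := by
    have h1 : (0:ℝ) ≤ sInf (lineAngle u₀ '' {v | v ∈ V ∧ v ≠ 0}) := sInf_angle_nonneg V u₀
    have h2 : sInf (lineAngle u₀ '' {v | v ∈ V ∧ v ≠ 0}) ≤ maxAngle U V :=
      le_csSup (bddAbove_maxAngle_set U V hv₀V hv₀) ⟨u₀, ⟨hu₀m.1, hu₀⟩, rfl⟩
    linarith [hmax]
  by_cases hbig : 1/2 ≤ K * δ
  · -- big δ: everything is at most π/2 ≤ π * K * δ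
    apply Real.sSup_le _ (by positivity)
    rintro x ⟨u, ⟨huM, hu0⟩, rfl⟩
    have := sInf_angle_le_pi_div_two (V ⊓ W) ⟨hv₀m.1, hv₀m.2⟩ hv₀ u
    nlinarith
  · push_neg at hbig
    apply Real.sSup_le _ (by positivity)
    rintro x ⟨u, ⟨huM, hu0⟩, rfl⟩
    apply le_of_forall_pos_le_add
    intro η hη
    set ε := min (η / (2 * K)) (1 / (8 * K)) with hεdef
    have hε0 : 0 < ε := lt_min (by positivity) (by positivity)
    have hεa : ε ≤ η / (2 * K) := min_le_left _ _
    have hεb : ε ≤ 1 / (8 * K) := min_le_right _ _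
    have hKε : K * ε ≤ 1 / 8 := by
      have := mul_le_mul_of_nonneg_left hεb hK0.le
      calc K * ε ≤ K * (1 / (8 * K)) := this
      _ = 1 / 8 := by field_simp [mul_comm]
    have hKη : Real.pi / 2 * K * ε ≤ η := by
      have h1 : 2 * K * ε ≤ η := by
        have := mul_le_mul_of_nonneg_left hεa (by positivity : (0:ℝ) ≤ 2 * K)
        calc 2 * K * ε ≤ 2 * K * (η / (2 * K)) := this
        _ = η := by field_simp
      nlinarith [mul_pos hK0 hε0]
    -- normalized u
    set uh := ‖u‖⁻¹ • u with huhdef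
    have huh1 : ‖uh‖ = 1 := norm_smul_inv_norm hu0
    have huh0 : uh ≠ 0 := by
      intro h; rw [h, norm_zero] at huh1; norm_num at huh1
    have huhU : uh ∈ U := U.smul_mem _ huM.1
    have huhW : uh ∈ W := W.smul_mem _ huM.2
    -- find v in V close to uh in angle
    have h5 : sInf (lineAngle uh '' {v | v ∈ V ∧ v ≠ 0}) ≤ δ :=
      (le_csSup (bddAbove_maxAngle_set U V hv₀V hv₀) ⟨uh, ⟨huhU, huh0⟩, rfl⟩).trans hmax
    have hne : (lineAngle uh '' {v | v ∈ V ∧ v ≠ 0}).Nonempty :=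
      ⟨lineAngle uh v₀, ⟨v₀, ⟨hv₀V, hv₀⟩, rfl⟩⟩
    have h6 : sInf (lineAngle uh '' {v | v ∈ V ∧ v ≠ 0}) < δ + ε :=
      lt_of_le_of_lt h5 (by linarith)
    obtain ⟨y, hy, hylt⟩ := exists_lt_of_csInf_lt hne h6
    obtain ⟨v, ⟨hvV, hv0⟩, rfl⟩ := hy
    unfold lineAngle at hylt
    -- bounds on δ + ε
    have hδ4 : δ < 1/4 := by nlinarith
    have hε16 : ε ≤ 1/16 := by nlinarith
    have hδε1 : δ + ε ≤ 1/2 := by linarith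
    have hδεpos : 0 < δ + ε := by linarith
    -- turn the angle bound into a distance bound
    set c := |⟪uh, v⟫| / (‖uh‖ * ‖v‖) with hcdef
    have hc' : c = |⟪uh, v⟫| / ‖v‖ := by rw [hcdef, huh1, one_mul]
    have hc0 : 0 ≤ c := by rw [hc']; positivity
    have hc1 : c ≤ 1 := div_le_one_of_le₀ (abs_real_inner_le_norm uh v) (by positivity)
    have harc : Real.arccos c < δ + ε := by rw [hcdef]; exact hylt
    have hcosnn : 0 ≤ Real.cos (δ + ε) :=
      Real.cos_nonneg_of_mem_Icc ⟨by linarith, by linarith⟩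
    have hcd : Real.cos (δ + ε) ≤ c := by
      have h7 := Real.cos_le_cos_of_nonneg_of_le_pi (Real.arccos_nonneg c)
        (by linarith : δ + ε ≤ Real.pi) harc.le
      rwa [Real.cos_arccos (by linarith) hc1] at h7
    obtain ⟨r, hr⟩ := exists_close_on_line huh1 hv0
    have hcsq : c ^ 2 = ⟪uh, v⟫ ^ 2 / ‖v‖ ^ 2 := by rw [hc', div_pow, sq_abs]
    have hdist : ‖uh - r • v‖ ≤ δ + ε := by
      have hsin : Real.sin (δ + ε) ≤ δ + ε := Real.sin_le hδεpos.le
      have hsin0 : 0 ≤ Real.sin (δ + ε) :=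
        Real.sin_nonneg_of_nonneg_of_le_pi hδεpos.le (by linarith)
      have hpyth := Real.sin_sq_add_cos_sq (δ + ε)
      apply le_of_sq_le_sq'' (norm_nonneg _) hδεpos.le
      rw [hr, ← hcsq]
      nlinarith
    -- decompose the error
    obtain ⟨b, hbW, hebV, hbnorm⟩ := decomp_of_minAngle V W hsup hγ hmin (uh - r • v)
    have hbK : ‖b‖ ≤ K * (δ + ε) :=
      hbnorm.trans (mul_le_mul_of_nonneg_left hdist hK0.le)
    set v' := uh - b with hv'def
    have hv'V : v' ∈ V := by
      have hid : v' = r • v + (uh - r • v - b) := by rw [hv'def]; abel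
      rw [hid]
      exact V.add_mem (V.smul_mem r hvV) hebV
    have hv'W : v' ∈ W := W.sub_mem huhW hbW
    have ht0 : 0 ≤ K * (δ + ε) := by positivity
    have ht34 : K * (δ + ε) ≤ 3/4 := by nlinarith
    have huhv' : uh - v' = b := by rw [hv'def]; abel
    have hv'norm : 1/4 ≤ ‖v'‖ := by
      have h8 : ‖uh‖ - ‖v'‖ ≤ ‖uh - v'‖ := norm_sub_norm_le uh v'
      rw [huhv'] at h8
      rw [huh1] at h8
      linarith
    have hv'0 : v' ≠ 0 := by
      intro h; rw [h, norm_zero] at hv'norm; linarith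
    have hangle : lineAngle uh v' ≤ Real.pi / 2 * (K * (δ + ε)) :=
      lineAngle_le_of_close huh1 hv'0 ht0 (by linarith)
        (by rw [huhv']; exact hbK)
    have hlu : lineAngle uh v' = lineAngle u v' :=
      lineAngle_smul_left (inv_ne_zero (norm_ne_zero_iff.2 hu0)) u v'
    have hp : 0 ≤ K * δ := by positivity
    calc sInf (lineAngle u '' {v | v ∈ V ⊓ W ∧ v ≠ 0})
        ≤ lineAngle u v' := csInf_le (bddBelow_angle (V ⊓ W) u)
          ⟨v', ⟨⟨hv'V, hv'W⟩, hv'0⟩, rfl⟩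
    _ = lineAngle uh v' := hlu.symm
    _ ≤ Real.pi / 2 * (K * (δ + ε)) := hangle
    _ = Real.pi / 2 * K * δ + Real.pi / 2 * K * ε := by ring
    _ ≤ Real.pi * K * δ + η := by nlinarith [mul_nonneg hπ.le hp]

end Main
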